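/- (Finite sum–product product formula, P-component of Prop. on the FMZV algebra) Let P ∈ A = F_q[θ] be monic irreducible with d := deg P. For tuples s ∈ ℕ^r and s' ∈ ℕ^{r'}, the product S_{<d}(s)·S_{<d}(s') is an F_p-linear combination Σ_i f_i S_{<d}(s_i) of truncated sums S_{<d}(s_i) with wt(s_i) = wt(s) + wt(s'), where the tuples s_i and coefficients f_i ∈ F_p depend only on s, s' (not on d or P). Here S_{<d}(t_1,…,t_l) := Σ_{d > deg a_1 > ⋯ > deg a_l, a_j monic} ∏ a_j^{−t_j} ∈ F_q(θ) and wt(t_1,…,t_l) := t_1 + ⋯ + t_l. -/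

import Mathlib

open Polynomial

noncomputable section

/-- The truncated multiple zeta sum `S_{<d}(s_1,…,s_r)`: the sum over tuples of monic
polynomials `a_1, …, a_r ∈ F_q[θ]` with `d > deg a_1 > ⋯ > deg a_r` of `∏ a_j^{-s_j}`. -/
def Sd (Fq : Type) [Field Fq] [Fintype Fq] (d : ℕ) {r : ℕ} (s : Fin r → ℕ) : RatFunc Fq :=
  ∑ᶠ a ∈ {a : Fin r → Polynomial Fq |
      (∀ l, (a l).Monic) ∧ (∀ l l', l < l' → (a l').natDegree < (a l).natDegree) ∧
      (∀ l, (a l).natDegree < d)},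
    ∏ l, (algebraMap (Polynomial Fq) (RatFunc Fq) (a l))⁻¹ ^ s l

section Dev
open Finset
set_option linter.unusedSectionVars false
section KeyFrac
variable {K : Type*} [Field K]
lemma key_frac (x z : K) (hx : x ≠ 0) (hxz : x + z ≠ 0) (hz : z ≠ 0) (a b c : ℕ)
    (ha : 1 ≤ a) (hb : 1 ≤ b) :
    x⁻¹^a * (x+z)⁻¹^b * z⁻¹^c
      = x⁻¹^a * (x+z)⁻¹^(b-1) * z⁻¹^(c+1) - x⁻¹^(a-1) * (x+z)⁻¹^b * z⁻¹^(c+1) := by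
  obtain ⟨a, rfl⟩ := Nat.exists_eq_add_of_le ha
  obtain ⟨b, rfl⟩ := Nat.exists_eq_add_of_le hb
  simp only [Nat.add_sub_cancel_left, add_tsub_cancel_left]
  have h1 : x⁻¹ - (x+z)⁻¹ = z * (x⁻¹ * (x+z)⁻¹) := by
    rw [inv_sub_inv hx hxz, add_sub_cancel_left, div_eq_mul_inv, mul_inv]
  have key : x⁻¹^(1+a) * (x+z)⁻¹^b * z⁻¹^(c+1) - x⁻¹^a * (x+z)⁻¹^(1+b) * z⁻¹^(c+1)
      = (x⁻¹^a * (x+z)⁻¹^b * z⁻¹^c) * (z⁻¹ * (x⁻¹ - (x+z)⁻¹)) := by ring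
  have h2 : z⁻¹ * (z * (x⁻¹ * (x+z)⁻¹)) = x⁻¹ * (x+z)⁻¹ := by
    rw [← mul_assoc, inv_mul_cancel₀ hz, one_mul]
  rw [key, h1, h2]; ring
end KeyFrac
variable (Fq : Type) [Field Fq] [Fintype Fq]

noncomputable def low {e : ℕ} (v : Fin e → Fq) : Polynomial Fq := ∑ i, C (v i) * X ^ (i : ℕ)
noncomputable def mon {e : ℕ} (v : Fin e → Fq) : Polynomial Fq := X ^ e + low Fq v

variable {Fq}
lemma low_degree_lt {e : ℕ} (v : Fin e → Fq) : (low Fq v).degree < e := by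
  classical
  apply lt_of_le_of_lt (degree_sum_le _ _)
  rw [Finset.sup_lt_iff (by exact_mod_cast WithBot.bot_lt_coe e)]
  intro i _
  exact lt_of_le_of_lt (degree_C_mul_X_pow_le _ _) (by exact_mod_cast i.2)

lemma mon_monic {e : ℕ} (v : Fin e → Fq) : (mon Fq v).Monic :=
  monic_X_pow_add (by simpa using low_degree_lt v)

lemma mon_degree {e : ℕ} (v : Fin e → Fq) : (mon Fq v).degree = e := by
  rw [mon, degree_add_eq_left_of_degree_lt (by simpa using low_degree_lt v), degree_X_pow]

lemma mon_natDegree {e : ℕ} (v : Fin e → Fq) : (mon Fq v).natDegree = e :=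
  natDegree_eq_of_degree_eq_some (mon_degree v)

lemma low_add {e : ℕ} (v w : Fin e → Fq) : low Fq (v + w) = low Fq v + low Fq w := by
  simp [low, C_add, add_mul, Finset.sum_add_distrib]

lemma mon_add_low {e : ℕ} (v w : Fin e → Fq) : mon Fq v + low Fq w = mon Fq (v + w) := by
  rw [mon, mon, low_add, add_assoc]

lemma mon_ne_zero {e : ℕ} (v : Fin e → Fq) : mon Fq v ≠ 0 := (mon_monic v).ne_zero

-- coeff of mon, and: every monic of natDegree e is mon of coeff vector
lemma low_coeff {e : ℕ} (v : Fin e → Fq) (n : ℕ) :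
    (low Fq v).coeff n = if h : n < e then v ⟨n, h⟩ else 0 := by
  classical
  rw [low, finset_sum_coeff]
  split
  · next h =>
    rw [Finset.sum_eq_single (⟨n, h⟩ : Fin e)] <;> simp +contextual [coeff_C_mul, coeff_X_pow, Fin.ext_iff, eq_comm]
  · next h =>
    apply Finset.sum_eq_zero; intro i _
    simp [coeff_C_mul, coeff_X_pow]
    intro hn; omega
    
lemma monic_eq_mon {f : Polynomial Fq} {e : ℕ} (hm : f.Monic) (hd : f.natDegree = e) :
    f = mon Fq (fun i : Fin e => f.coeff i) := by
  ext n
  rw [mon, coeff_add, coeff_X_pow, low_coeff]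
  rcases lt_trichotomy n e with h | h | h
  · simp [h, ne_of_lt h]
  · subst h; simp [hd ▸ hm.coeff_natDegree, (by omega : ¬ n < n)]
  · rw [coeff_eq_zero_of_natDegree_lt (by omega), if_neg (by omega), dif_neg (by omega), add_zero]

-- ### Power sums
variable (Fq) in
noncomputable def PP (e a : ℕ) : RatFunc Fq :=
  ∑ v : Fin e → Fq, (algebraMap (Polynomial Fq) (RatFunc Fq) (mon Fq v))⁻¹ ^ a

variable (Fq) in
noncomputable def UU (e c : ℕ) : RatFunc Fq :=
  ∑ w : Fin e → Fq, (algebraMap (Polynomial Fq) (RatFunc Fq) (low Fq w))⁻¹ ^ c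

variable (Fq) in
noncomputable def TT (e a b c : ℕ) : RatFunc Fq :=
  ∑ v : Fin e → Fq, ∑ w : Fin e → Fq,
    (algebraMap (Polynomial Fq) (RatFunc Fq) (mon Fq v))⁻¹ ^ a *
    (algebraMap (Polynomial Fq) (RatFunc Fq) (mon Fq v + low Fq w))⁻¹ ^ b *
    (algebraMap (Polynomial Fq) (RatFunc Fq) (low Fq w))⁻¹ ^ c

local notation "am" => algebraMap (Polynomial Fq) (RatFunc Fq)

lemma am_mon_ne_zero {e : ℕ} (v : Fin e → Fq) : (am (mon Fq v)) ≠ 0 := by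
  simpa using (map_ne_zero_iff am (IsFractionRing.injective _ _)).2 (mon_ne_zero v)

lemma TT_rec (e a b c : ℕ) (ha : 1 ≤ a) (hb : 1 ≤ b) (hc : 1 ≤ c) :
    TT Fq e a b c = TT Fq e a (b-1) (c+1) - TT Fq e (a-1) b (c+1) := by
  rw [TT, TT, TT, ← Finset.sum_sub_distrib]
  refine Finset.sum_congr rfl fun v _ => ?_
  rw [← Finset.sum_sub_distrib]
  refine Finset.sum_congr rfl fun w _ => ?_
  by_cases hw : low Fq w = 0
  · obtain ⟨c, rfl⟩ := Nat.exists_eq_add_of_le hc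
    simp [hw, pow_add, pow_succ]
  · rw [map_add]
    exact key_frac _ _ (am_mon_ne_zero v)
      (by rw [← map_add, mon_add_low]; exact am_mon_ne_zero _)
      ((map_ne_zero_iff am (IsFractionRing.injective _ _)).2 hw) a b c ha hb

lemma TT_b0 (e a c : ℕ) : TT Fq e a 0 c = PP Fq e a * UU Fq e c := by
  rw [TT, PP, UU, Finset.sum_mul_sum]
  exact Finset.sum_congr rfl fun v _ => Finset.sum_congr rfl fun w _ => by
    rw [pow_zero, mul_one]

lemma TT_a0 (e b c : ℕ) : TT Fq e 0 b c = PP Fq e b * UU Fq e c := by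
  rw [TT, Finset.sum_comm, mul_comm (PP Fq e b), UU, PP, Finset.sum_mul]
  refine Finset.sum_congr rfl fun w _ => ?_
  rw [Finset.mul_sum]
  refine Fintype.sum_equiv (Equiv.addRight w) _ _ fun v => ?_
  rw [Equiv.coe_addRight, pow_zero, one_mul, mon_add_low, mul_comm]

lemma TT_00 (e c : ℕ) (hc : 1 ≤ c) : TT Fq e 0 0 c = 0 := by
  rcases Nat.eq_zero_or_pos e with rfl | he
  · simp [TT, low, zero_pow (by omega : c ≠ 0)]
  · rw [TT]
    simp only [pow_zero, one_mul]
    rw [Finset.sum_const, Finset.card_univ, Fintype.card_fun, Fintype.card_fin,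
      nsmul_eq_mul, Nat.cast_pow]
    have : ((Fintype.card Fq : ℕ) : RatFunc Fq) = 0 := by
      rw [← map_natCast (algebraMap Fq (RatFunc Fq)), FiniteField.cast_card_eq_zero, map_zero]
    rw [this, zero_pow (by omega : e ≠ 0), zero_mul]

-- ### combinations of P * U terms
variable (Fq) in
noncomputable def Ucomb (L : List (ℤ × ℕ × ℕ)) (e : ℕ) : RatFunc Fq :=
  (L.map fun x => x.1 • (PP Fq e x.2.1 * UU Fq e x.2.2)).sum

lemma Ucomb_append (L1 L2 : List (ℤ × ℕ × ℕ)) (e : ℕ) :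
    Ucomb Fq (L1 ++ L2) e = Ucomb Fq L1 e + Ucomb Fq L2 e := by
  rw [Ucomb, List.map_append, List.sum_append]; rfl

lemma Ucomb_neg (L : List (ℤ × ℕ × ℕ)) (e : ℕ) :
    Ucomb Fq (L.map fun x => (-x.1, x.2)) e = - Ucomb Fq L e := by
  induction L with
  | nil => simp [Ucomb]
  | cons x L ih => simp only [Ucomb, List.map_cons, List.sum_cons] at ih ⊢
                   rw [ih]; push_cast; ring_nf

lemma Tdecomp : ∀ N a b c, a + b ≤ N → 1 ≤ c → ∃ L : List (ℤ × ℕ × ℕ),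
    (∀ x ∈ L, 1 ≤ x.2.1 ∧ 1 ≤ x.2.2 ∧ x.2.1 + x.2.2 = a + b + c) ∧
    ∀ e, TT Fq e a b c = Ucomb Fq L e := by
  have base00 : ∀ c, 1 ≤ c → ∃ L : List (ℤ × ℕ × ℕ),
      (∀ x ∈ L, 1 ≤ x.2.1 ∧ 1 ≤ x.2.2 ∧ x.2.1 + x.2.2 = 0 + 0 + c) ∧
      ∀ e, TT Fq e 0 0 c = Ucomb Fq L e :=
    fun c hc => ⟨[], by simp, fun e => by rw [TT_00 e c hc]; simp [Ucomb]⟩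
  intro N
  induction N with
  | zero =>
    intro a b c hab hc
    obtain rfl : a = 0 := by omega
    obtain rfl : b = 0 := by omega
    exact base00 c hc
  | succ N ih =>
    intro a b c hab hc
    rcases Nat.eq_zero_or_pos a with rfl | ha
    · rcases Nat.eq_zero_or_pos b with rfl | hb
      · exact base00 c hc
      · exact ⟨[(1, b, c)], by simp; omega,
          fun e => by rw [TT_a0]; simp [Ucomb]⟩
    · rcases Nat.eq_zero_or_pos b with rfl | hb
      · exact ⟨[(1, a, c)], by simp; omega,
          fun e => by rw [TT_b0]; simp [Ucomb]⟩
      · obtain ⟨L1, h1, e1⟩ := ih a (b-1) (c+1) (by omega) (by omega)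
        obtain ⟨L2, h2, e2⟩ := ih (a-1) b (c+1) (by omega) (by omega)
        refine ⟨L1 ++ L2.map (fun x => (-x.1, x.2)), ?_, fun e => ?_⟩
        · intro x hx
          rcases List.mem_append.1 hx with hx | hx
          · have := h1 x hx; omega
          · obtain ⟨y, hy, rfl⟩ := List.mem_map.1 hx
            have := h2 y hy
            exact ⟨this.1, this.2.1, by simp; omega⟩
        · rw [TT_rec e a b c ha hb hc, e1, e2, Ucomb_append, Ucomb_neg, sub_eq_add_neg]

-- ### UU evaluation
lemma low_eq_zero {e : ℕ} {w : Fin e → Fq} : low Fq w = 0 ↔ w = 0 := by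
  constructor
  · intro h
    funext i
    have := congrArg (fun g => Polynomial.coeff g (i : ℕ)) h
    simp only [low_coeff, coeff_zero] at this
    rwa [dif_pos i.2, Fin.eta] at this
  · rintro rfl; simp [low]

lemma low_snoc {e : ℕ} (v : Fin e → Fq) (c : Fq) :
    low Fq (Fin.snoc v c) = low Fq v + C c * X ^ e := by
  rw [low, Fin.sum_univ_castSucc]
  simp [low]

lemma C_mul_mon {e : ℕ} (c : Fq) (hc : c ≠ 0) (v : Fin e → Fq) :
    C c * mon Fq (c⁻¹ • v) = low Fq v + C c * X ^ e := by
  rw [mon, mul_add, add_comm]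
  congr 1
  rw [low, low, Finset.mul_sum]
  refine Finset.sum_congr rfl fun i _ => ?_
  rw [← mul_assoc, ← C_mul, Pi.smul_apply, smul_eq_mul, ← mul_assoc, mul_inv_cancel₀ hc, one_mul]

variable (Fq) in
noncomputable def zU (j : ℕ) : ℤ := if (Fintype.card Fq - 1) ∣ j then -1 else 0

variable [DecidableEq Fq]

lemma sum_units_apply {M : Type*} [AddCommMonoid M] (f : Fq → M) (h0 : f 0 = 0) :
    ∑ u : Fqˣ, f (u : Fq) = ∑ c : Fq, f c := by
  classical
  rw [← Finset.sum_erase_add Finset.univ f (Finset.mem_univ (0 : Fq)), h0, add_zero]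
  refine Finset.sum_bij (fun u _ => (u : Fq)) ?_ ?_ ?_ ?_
  · intro u _; exact Finset.mem_erase.2 ⟨u.ne_zero, Finset.mem_univ _⟩
  · intro u _ u' _ h; exact Units.ext h
  · intro c hc
    exact ⟨Units.mk0 c (Finset.mem_erase.1 hc).1, Finset.mem_univ _, rfl⟩
  · intro u _; rfl

lemma sum_inv_pow_units (j : ℕ) :
    ∑ u : Fqˣ, ((u : Fq)⁻¹) ^ j = ((zU Fq j : ℤ) : Fq) := by
  classical
  have : ∀ u : Fqˣ, ((u : Fq)⁻¹) ^ j = (((u⁻¹ : Fqˣ) : Fq)) ^ j := by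
    intro u; rw [← Units.val_inv_eq_inv_val]
  rw [Finset.sum_congr rfl fun u _ => this u]
  have h2 : ∑ u : Fqˣ, (((u⁻¹ : Fqˣ) : Fq)) ^ j = ∑ u : Fqˣ, ((u : Fq)) ^ j :=
    Fintype.sum_equiv (Equiv.inv Fqˣ) _ _ (fun u => by simp)
  rw [h2, FiniteField.sum_pow_units Fq j, zU]
  split <;> simp

lemma am_C (c : Fq) : am (C c) = algebraMap Fq (RatFunc Fq) c := by
  rw [IsScalarTower.algebraMap_eq Fq (Polynomial Fq) (RatFunc Fq), RingHom.comp_apply,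
    Polynomial.algebraMap_eq]

lemma UU_zero (j : ℕ) (hj : 1 ≤ j) : UU Fq 0 j = 0 := by
  have h : ∀ v : Fin 0 → Fq, (am (low Fq v))⁻¹ ^ j = 0 := fun v => by
    simp [low, zero_pow (by omega : j ≠ 0)]
  rw [UU, Finset.sum_congr rfl fun v _ => h v, Finset.sum_const_zero]

lemma UU_succ (e j : ℕ) (hj : 1 ≤ j) :
    UU Fq (e+1) j = UU Fq e j + ((zU Fq j : ℤ) : RatFunc Fq) * PP Fq e j := by
  rw [UU]
  have hre := Fintype.sum_equiv (Fin.snocEquiv (fun _ : Fin (e+1) => Fq)).symm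
    (fun w : Fin (e+1) → Fq => (am (low Fq w))⁻¹ ^ j)
    (fun p : Fq × (Fin e → Fq) => (am (low Fq (Fin.snoc p.2 p.1)))⁻¹ ^ j)
    (fun w => by rw [Fin.snocEquiv_symm_apply]; simp only [Fin.snoc_init_self])
  rw [hre, Fintype.sum_prod_type]
  have hterm : ∀ c : Fq, (∑ v : Fin e → Fq, (am (low Fq (Fin.snoc v c)))⁻¹ ^ j)
      = (if c = 0 then UU Fq e j else 0) +
        (if c = 0 then 0 else (am (C c))⁻¹ ^ j) * PP Fq e j := by
    intro c
    by_cases hc : c = 0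
    · subst hc
      simp only [if_pos rfl, if_true, zero_mul, add_zero, UU]
      refine Finset.sum_congr rfl fun v _ => ?_
      rw [low_snoc]; simp
    · simp only [if_neg hc, zero_add]
      rw [PP, Finset.mul_sum]
      refine Fintype.sum_equiv (MulAction.toPerm ((Units.mk0 c hc)⁻¹ : Fqˣ)) _ _ fun v => ?_
      have hsv : ((Units.mk0 c hc)⁻¹ : Fqˣ) • v = c⁻¹ • v := funext fun i => by
        simp [Units.smul_def, Units.val_inv_eq_inv_val]
      rw [MulAction.toPerm_apply, hsv, low_snoc, ← C_mul_mon c hc v, map_mul, mul_inv, mul_pow]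
  rw [Finset.sum_congr rfl (fun c _ => hterm c), Finset.sum_add_distrib]
  congr 1
  · rw [Finset.sum_ite_eq' Finset.univ (0:Fq) (fun _ => UU Fq e j), if_pos (Finset.mem_univ _)]
  · rw [← Finset.sum_mul]
    congr 1
    rw [← sum_units_apply (fun c => if c = 0 then 0 else (am (C c))⁻¹ ^ j) (by simp)]
    have : ∀ u : Fqˣ, (if (u : Fq) = 0 then 0 else (am (C (u : Fq)))⁻¹ ^ j)
        = algebraMap Fq (RatFunc Fq) (((u : Fq))⁻¹ ^ j) := by
      intro u
      rw [if_neg u.ne_zero, am_C, map_pow, map_inv₀]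
    rw [Finset.sum_congr rfl (fun u _ => this u), ← map_sum, sum_inv_pow_units, map_intCast]

lemma UU_eq (e j : ℕ) (hj : 1 ≤ j) :
    UU Fq e j = ((zU Fq j : ℤ) : RatFunc Fq) * ∑ t ∈ Finset.range e, PP Fq t j := by
  induction e with
  | zero => rw [UU_zero j hj]; simp
  | succ e ih =>
    rw [UU_succ e j hj, ih, Finset.range_add_one, Finset.sum_insert (by simp)]
    ring

-- ### product of two power sums of the same degree
lemma PP_mul_PP (e a b : ℕ) (ha : 1 ≤ a) (hb : 1 ≤ b) :
    PP Fq e a * PP Fq e b + TT Fq e (a-1) b 1 = PP Fq e (a+b) + TT Fq e a (b-1) 1 := by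
  rw [PP, PP, Finset.sum_mul_sum]
  have h1 : ∀ v : Fin e → Fq,
      (∑ w' : Fin e → Fq, (am (mon Fq v))⁻¹ ^ a * (am (mon Fq w'))⁻¹ ^ b)
      = ∑ w : Fin e → Fq, (am (mon Fq v))⁻¹ ^ a * (am (mon Fq v + low Fq w))⁻¹ ^ b :=
    fun v => (Fintype.sum_equiv (Equiv.addLeft v)
      (fun w => (am (mon Fq v))⁻¹ ^ a * (am (mon Fq v + low Fq w))⁻¹ ^ b)
      (fun w' => (am (mon Fq v))⁻¹ ^ a * (am (mon Fq w'))⁻¹ ^ b)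
      (fun w => by simp only [Equiv.coe_addLeft, mon_add_low])).symm
  rw [Finset.sum_congr rfl fun v _ => h1 v]
  have h2 : PP Fq e (a+b)
      = ∑ v : Fin e → Fq, ∑ w : Fin e → Fq,
        (if w = 0 then (am (mon Fq v))⁻¹ ^ (a+b) else 0) := by
    rw [PP]
    refine Finset.sum_congr rfl fun v _ => ?_
    rw [Finset.sum_ite_eq' Finset.univ (0 : Fin e → Fq)
      (fun _ => (am (mon Fq v))⁻¹ ^ (a+b)), if_pos (Finset.mem_univ _)]
  rw [h2, TT, TT, ← Finset.sum_add_distrib, ← Finset.sum_add_distrib]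
  refine Finset.sum_congr rfl fun v _ => ?_
  rw [← Finset.sum_add_distrib, ← Finset.sum_add_distrib]
  refine Finset.sum_congr rfl fun w _ => ?_
  by_cases hw : w = 0
  · subst hw
    rw [if_pos rfl, low_eq_zero.2 rfl]
    simp [pow_add]
  · rw [if_neg hw]
    have hz : (am (low Fq w)) ≠ 0 :=
      (map_ne_zero_iff am (IsFractionRing.injective _ _)).2 (fun h => hw (low_eq_zero.1 h))
    have := key_frac (am (mon Fq v)) (am (low Fq w)) (am_mon_ne_zero v)
      (by rw [← map_add, mon_add_low]; exact am_mon_ne_zero _) hz a b 0 ha hb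
    rw [pow_zero, mul_one] at this
    rw [map_add]
    linear_combination this

lemma PP_mul_decomp (a b : ℕ) (ha : 1 ≤ a) (hb : 1 ≤ b) :
    ∃ L : List (ℤ × ℕ × ℕ), (∀ x ∈ L, 1 ≤ x.2.1 ∧ 1 ≤ x.2.2 ∧ x.2.1 + x.2.2 = a + b) ∧
    ∀ e, PP Fq e a * PP Fq e b = PP Fq e (a+b) + Ucomb Fq L e := by
  obtain ⟨L1, h1, e1⟩ := Tdecomp (Fq := Fq) (a + (b-1)) a (b-1) 1 le_rfl le_rfl
  obtain ⟨L2, h2, e2⟩ := Tdecomp (Fq := Fq) ((a-1) + b) (a-1) b 1 le_rfl le_rfl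
  refine ⟨L1 ++ L2.map (fun x => (-x.1, x.2)), ?_, fun e => ?_⟩
  · intro x hx
    rcases List.mem_append.1 hx with hx | hx
    · have := h1 x hx; omega
    · obtain ⟨y, hy, rfl⟩ := List.mem_map.1 hx
      have := h2 y hy
      exact ⟨this.1, this.2.1, by simp; omega⟩
  · have := PP_mul_PP (Fq := Fq) e a b ha hb
    rw [e1, e2] at this
    rw [Ucomb_append, Ucomb_neg]
    linear_combination this

-- ### truncated multiple sums, list version
variable (Fq) in
noncomputable def SL : List ℕ → ℕ → RatFunc Fq
  | [], _ => 1
  | (a :: t), d => ∑ e ∈ Finset.range d, PP Fq e a * SL t e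

lemma SL_nil (d : ℕ) : SL Fq [] d = 1 := rfl
lemma SL_cons (a : ℕ) (t : List ℕ) (d : ℕ) :
    SL Fq (a :: t) d = ∑ e ∈ Finset.range d, PP Fq e a * SL Fq t e := rfl

lemma SL_single (j d : ℕ) : SL Fq [j] d = ∑ t ∈ Finset.range d, PP Fq t j := by
  rw [SL_cons]
  exact Finset.sum_congr rfl fun t _ => by rw [SL_nil, mul_one]

variable (Fq) in
noncomputable def Lcomb (L : List (ℤ × List ℕ)) (d : ℕ) : RatFunc Fq :=
  (L.map fun x => x.1 • SL Fq x.2 d).sum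

lemma Lcomb_append (L1 L2 : List (ℤ × List ℕ)) (d : ℕ) :
    Lcomb Fq (L1 ++ L2) d = Lcomb Fq L1 d + Lcomb Fq L2 d := by
  rw [Lcomb, List.map_append, List.sum_append]; rfl

lemma Lcomb_smul (z : ℤ) (L : List (ℤ × List ℕ)) (d : ℕ) :
    Lcomb Fq (L.map fun x => (z * x.1, x.2)) d = z • Lcomb Fq L d := by
  induction L with
  | nil => simp [Lcomb]
  | cons x L ih =>
    simp only [Lcomb, List.map_cons, List.sum_cons] at ih ⊢
    rw [ih, smul_add, mul_smul]

lemma Lcomb_prepend (L : List (ℤ × List ℕ)) (k d : ℕ) :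
    ∑ e ∈ Finset.range d, PP Fq e k * Lcomb Fq L e
      = Lcomb Fq (L.map fun x => (x.1, k :: x.2)) d := by
  induction L with
  | nil => simp [Lcomb]
  | cons x L ih =>
    simp only [Lcomb, List.map_cons, List.sum_cons] at ih ⊢
    rw [← ih, SL_cons, Finset.smul_sum, ← Finset.sum_add_distrib]
    refine Finset.sum_congr rfl fun e _ => ?_
    rw [mul_add, mul_smul_comm]

lemma Lcomb_mul_left (g : RatFunc Fq) (L : List (ℤ × List ℕ)) (e : ℕ) :
    g * Lcomb Fq L e = (L.map fun x => x.1 • (g * SL Fq x.2 e)).sum := by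
  induction L with
  | nil => simp [Lcomb]
  | cons x L ih =>
    simp only [Lcomb, List.map_cons, List.sum_cons] at ih ⊢
    rw [mul_add, ih, mul_smul_comm]

lemma list_sum_mul {α : Type*} (L : List α) (f : α → RatFunc Fq) (g : RatFunc Fq) :
    (L.map f).sum * g = (L.map fun x => f x * g).sum := by
  induction L with
  | nil => simp
  | cons x L ih => simp [add_mul, ih]

lemma list_finset_swap {α : Type*} (L : List α) (f : α → ℕ → RatFunc Fq) (s : Finset ℕ) :
    ∑ e ∈ s, (L.map fun x => f x e).sum = (L.map fun x => ∑ e ∈ s, f x e).sum := by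
  induction L with
  | nil => simp
  | cons x L ih => simp [Finset.sum_add_distrib, ih]

lemma list_comb_subst {α : Type*} (L : List α) (c : α → ℤ) (f : α → ℕ → RatFunc Fq)
    (Q : List ℕ → Prop)
    (h : ∀ x ∈ L, ∃ Lx : List (ℤ × List ℕ), (∀ y ∈ Lx, Q y.2) ∧ ∀ e, f x e = Lcomb Fq Lx e) :
    ∃ M : List (ℤ × List ℕ), (∀ y ∈ M, Q y.2) ∧
      ∀ e, (L.map fun x => c x • f x e).sum = Lcomb Fq M e := by
  induction L with
  | nil => exact ⟨[], by simp, fun e => by simp [Lcomb]⟩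
  | cons x L ih =>
    obtain ⟨Lx, hQ, hf⟩ := h x List.mem_cons_self
    obtain ⟨M, hMQ, hM⟩ := ih (fun y hy => h y (List.mem_cons_of_mem _ hy))
    refine ⟨Lx.map (fun y => (c x * y.1, y.2)) ++ M, ?_, fun e => ?_⟩
    · intro y hy
      rcases List.mem_append.1 hy with hy | hy
      · obtain ⟨z, hz, rfl⟩ := List.mem_map.1 hy; exact hQ z hz
      · exact hMQ y hy
    · simp only [List.map_cons, List.sum_cons]
      rw [hf e, hM e, Lcomb_append, Lcomb_smul]

lemma sum_mul_sum_range (f g : ℕ → RatFunc Fq) (d : ℕ) :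
    (∑ e ∈ Finset.range d, f e) * (∑ e ∈ Finset.range d, g e)
    = ∑ e ∈ Finset.range d, (∑ t ∈ Finset.range e, f t) * g e
    + ∑ e ∈ Finset.range d, f e * (∑ t ∈ Finset.range e, g t)
    + ∑ e ∈ Finset.range d, f e * g e := by
  induction d with
  | zero => simp
  | succ d ih =>
    rw [Finset.sum_range_succ, Finset.sum_range_succ, Finset.sum_range_succ,
      Finset.sum_range_succ, Finset.sum_range_succ]
    linear_combination ih

lemma stuffle (W : ℕ) : ∀ u v : List ℕ, u.sum + v.sum ≤ W →
    (∀ n ∈ u, 1 ≤ n) → (∀ n ∈ v, 1 ≤ n) →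
    ∃ L : List (ℤ × List ℕ),
      (∀ x ∈ L, (∀ n ∈ x.2, 1 ≤ n) ∧ x.2.sum = u.sum + v.sum) ∧
      ∀ d, SL Fq u d * SL Fq v d = Lcomb Fq L d := by
  have base1 : ∀ v : List ℕ, (∀ n ∈ v, 1 ≤ n) →
      ∃ L : List (ℤ × List ℕ),
      (∀ x ∈ L, (∀ n ∈ x.2, 1 ≤ n) ∧ x.2.sum = List.sum [] + v.sum) ∧
      ∀ d, SL Fq [] d * SL Fq v d = Lcomb Fq L d := by
    intro v hv
    refine ⟨[(1, v)], ?_, fun d => ?_⟩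
    · intro x hx
      rw [List.mem_singleton] at hx
      subst hx
      exact ⟨hv, by simp⟩
    · rw [SL_nil, one_mul]; simp [Lcomb]
  induction W with
  | zero =>
    intro u v hw hu hv
    cases u with
    | nil => exact base1 v hv
    | cons a u' =>
      exfalso
      have := hu a List.mem_cons_self
      simp only [List.sum_cons] at hw
      omega
  | succ W ih =>
    intro u v hw hu hv
    cases u with
    | nil => exact base1 v hv
    | cons a u' =>
    cases v with
    | nil =>
      refine ⟨[(1, a :: u')], ?_, fun d => ?_⟩
      · intro x hx
        rw [List.mem_singleton] at hx
        subst hx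
        exact ⟨hu, by simp⟩
      · rw [SL_nil, mul_one]; simp [Lcomb]
    | cons b v' =>
      have ha : 1 ≤ a := hu a List.mem_cons_self
      have hb : 1 ≤ b := hv b List.mem_cons_self
      have hu' : ∀ n ∈ u', 1 ≤ n := fun n hn => hu n (List.mem_cons_of_mem _ hn)
      have hv' : ∀ n ∈ v', 1 ≤ n := fun n hn => hv n (List.mem_cons_of_mem _ hn)
      simp only [List.sum_cons] at hw ⊢
      obtain ⟨L1, hL1, eL1⟩ := ih (a::u') v' (by simp only [List.sum_cons]; omega) hu hv'
      obtain ⟨L2, hL2, eL2⟩ := ih u' (b::v') (by simp only [List.sum_cons]; omega) hu' hv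
      obtain ⟨L3, hL3, eL3⟩ := ih u' v' (by omega) hu' hv'
      obtain ⟨LA, hLA, eLA⟩ := PP_mul_decomp (Fq := Fq) a b ha hb
      simp only [List.sum_cons] at hL1 hL2 hL3
      have hcor : ∀ y ∈ LA, ∃ My : List (ℤ × List ℕ),
          (∀ x ∈ My, (∀ n ∈ x.2, 1 ≤ n) ∧ x.2.sum = (a + u'.sum) + (b + v'.sum)) ∧
          ∀ d, (∑ e ∈ Finset.range d, PP Fq e y.2.1 * (UU Fq e y.2.2 * Lcomb Fq L3 e))
            = Lcomb Fq My d := by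
        intro y hy
        obtain ⟨hi, hj, hij⟩ := hLA y hy
        have hsub : ∀ x ∈ L3, ∃ Lx : List (ℤ × List ℕ),
            (∀ z ∈ Lx, (∀ n ∈ z.2, 1 ≤ n) ∧ z.2.sum = y.2.2 + (u'.sum + v'.sum)) ∧
            ∀ e, SL Fq [y.2.2] e * SL Fq x.2 e = Lcomb Fq Lx e := by
          intro x hx
          obtain ⟨hxpos, hxsum⟩ := hL3 x hx
          obtain ⟨Lx, h1x, h2x⟩ := ih [y.2.2] x.2
            (by simp only [List.sum_cons, List.sum_nil, hxsum]; omega)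
            (by intro n hn; rw [List.mem_singleton] at hn; subst hn; exact hj)
            hxpos
          refine ⟨Lx, fun z hz => ⟨(h1x z hz).1, ?_⟩, h2x⟩
          rw [(h1x z hz).2, hxsum]; simp
        obtain ⟨M1, hM1, eM1⟩ := list_comb_subst L3 (fun x => x.1)
          (fun x e => SL Fq [y.2.2] e * SL Fq x.2 e)
          (fun l => (∀ n ∈ l, 1 ≤ n) ∧ l.sum = y.2.2 + (u'.sum + v'.sum)) hsub
        refine ⟨(M1.map (fun x => (zU Fq y.2.2 * x.1, x.2))).map
          (fun x => (x.1, y.2.1 :: x.2)), ?_, fun d => ?_⟩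
        · intro x hx
          simp only [List.mem_map] at hx
          obtain ⟨z, ⟨z0, hz0, rfl⟩, rfl⟩ := hx
          obtain ⟨hz1, hz2⟩ := hM1 z0 hz0
          constructor
          · intro n hn
            rcases List.mem_cons.1 hn with rfl | hn
            · exact hi
            · exact hz1 n hn
          · simp only [List.sum_cons]; omega
        · rw [← Lcomb_prepend]
          refine Finset.sum_congr rfl fun e _ => ?_
          congr 1
          rw [Lcomb_smul, ← eM1 e, UU_eq e y.2.2 hj, ← SL_single, mul_assoc, Lcomb_mul_left,
            zsmul_eq_mul]
      obtain ⟨MD, hMD, eMD⟩ := list_comb_subst LA (fun y => y.1)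
        (fun y d => ∑ e ∈ Finset.range d, PP Fq e y.2.1 * (UU Fq e y.2.2 * Lcomb Fq L3 e))
        (fun l => (∀ n ∈ l, 1 ≤ n) ∧ l.sum = (a + u'.sum) + (b + v'.sum)) hcor
      refine ⟨L1.map (fun x => (x.1, b :: x.2)) ++ L2.map (fun x => (x.1, a :: x.2))
        ++ L3.map (fun x => (x.1, (a+b) :: x.2)) ++ MD, ?_, fun d => ?_⟩
      · intro x hx
        rcases List.mem_append.1 hx with hx | hx
        · rcases List.mem_append.1 hx with hx | hx
          · rcases List.mem_append.1 hx with hx | hx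
            · obtain ⟨z, hz, rfl⟩ := List.mem_map.1 hx
              obtain ⟨hz1, hz2⟩ := hL1 z hz
              refine ⟨fun n hn => ?_, by simp only [List.sum_cons]; omega⟩
              rcases List.mem_cons.1 hn with rfl | hn
              · exact hb
              · exact hz1 n hn
            · obtain ⟨z, hz, rfl⟩ := List.mem_map.1 hx
              obtain ⟨hz1, hz2⟩ := hL2 z hz
              refine ⟨fun n hn => ?_, by simp only [List.sum_cons]; omega⟩
              rcases List.mem_cons.1 hn with rfl | hn
              · exact ha
              · exact hz1 n hn
          · obtain ⟨z, hz, rfl⟩ := List.mem_map.1 hx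
            obtain ⟨hz1, hz2⟩ := hL3 z hz
            refine ⟨fun n hn => ?_, by simp only [List.sum_cons]; omega⟩
            rcases List.mem_cons.1 hn with rfl | hn
            · omega
            · exact hz1 n hn
        · exact hMD x hx
      · rw [SL_cons, SL_cons, sum_mul_sum_range, Lcomb_append, Lcomb_append, Lcomb_append]
        have e1 : (∑ e ∈ Finset.range d,
              (∑ t ∈ Finset.range e, PP Fq t a * SL Fq u' t) * (PP Fq e b * SL Fq v' e))
            = Lcomb Fq (L1.map (fun x => (x.1, b :: x.2))) d := by
          rw [← Lcomb_prepend]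
          refine Finset.sum_congr rfl fun e _ => ?_
          rw [← SL_cons, ← eL1 e]
          ring
        have e2 : (∑ e ∈ Finset.range d,
              (PP Fq e a * SL Fq u' e) * (∑ t ∈ Finset.range e, PP Fq t b * SL Fq v' t))
            = Lcomb Fq (L2.map (fun x => (x.1, a :: x.2))) d := by
          rw [← Lcomb_prepend]
          refine Finset.sum_congr rfl fun e _ => ?_
          rw [← SL_cons, ← eL2 e]
          ring
        have e3 : (∑ e ∈ Finset.range d,
              (PP Fq e a * SL Fq u' e) * (PP Fq e b * SL Fq v' e))
            = Lcomb Fq (L3.map (fun x => (x.1, (a+b) :: x.2))) d + Lcomb Fq MD d := by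
          have per : ∀ e, (PP Fq e a * SL Fq u' e) * (PP Fq e b * SL Fq v' e)
              = PP Fq e (a+b) * Lcomb Fq L3 e +
                (LA.map fun y => y.1 • (PP Fq e y.2.1 * (UU Fq e y.2.2 * Lcomb Fq L3 e))).sum := by
            intro e
            have hre : (PP Fq e a * SL Fq u' e) * (PP Fq e b * SL Fq v' e)
                = (PP Fq e a * PP Fq e b) * (SL Fq u' e * SL Fq v' e) := by ring
            rw [hre, eLA e, eL3 e, add_mul]
            congr 1
            rw [Ucomb, list_sum_mul]
            refine congrArg List.sum (List.map_congr_left fun y hy => ?_)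
            rw [smul_mul_assoc, mul_assoc]
          rw [Finset.sum_congr rfl fun e _ => per e, Finset.sum_add_distrib]
          congr 1
          · rw [← Lcomb_prepend]
          · rw [list_finset_swap, ← eMD d]
            refine congrArg List.sum (List.map_congr_left fun y hy => ?_)
            rw [Finset.smul_sum]
        rw [e1, e2, e3]
        ring


def ME (e : ℕ) : Finset (Polynomial Fq) := (Finset.univ : Finset (Fin e → Fq)).image (mon Fq)

lemma mem_ME {e : ℕ} {g : Polynomial Fq} : g ∈ ME (Fq := Fq) e ↔ g.Monic ∧ g.natDegree = e := by
  constructor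
  · intro hg
    obtain ⟨v, _, rfl⟩ := Finset.mem_image.1 hg
    exact ⟨mon_monic v, mon_natDegree v⟩
  · rintro ⟨hm, hd⟩
    exact Finset.mem_image.2 ⟨_, Finset.mem_univ _, (monic_eq_mon hm hd).symm⟩

lemma mon_coeff_fin {e : ℕ} (v : Fin e → Fq) (i : Fin e) : (mon Fq v).coeff i = v i := by
  rw [mon, coeff_add, coeff_X_pow, low_coeff, dif_pos i.2, if_neg (Nat.ne_of_lt i.2), zero_add,
    Fin.eta]

lemma mon_inj {e : ℕ} : Function.Injective (mon Fq (e := e)) := by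
  intro v w h
  funext i
  rw [← mon_coeff_fin v i, ← mon_coeff_fin w i, h]

lemma PP_eq_sum_ME (e k : ℕ) : PP Fq e k = ∑ g ∈ ME (Fq := Fq) e, (am g)⁻¹ ^ k := by
  rw [PP, ME, Finset.sum_image (fun v _ w _ h => mon_inj h)]

def MD (d : ℕ) : Finset (Polynomial Fq) := (Finset.range d).biUnion (fun e => ME e)

lemma mem_MD {d : ℕ} {g : Polynomial Fq} :
    g ∈ MD (Fq := Fq) d ↔ g.Monic ∧ g.natDegree < d := by
  simp only [MD, Finset.mem_biUnion, Finset.mem_range, mem_ME]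
  constructor
  · rintro ⟨e, he, hm, rfl⟩; exact ⟨hm, he⟩
  · rintro ⟨hm, hd⟩; exact ⟨g.natDegree, hd, hm, rfl⟩

def Afin (r d : ℕ) : Finset (Fin r → Polynomial Fq) :=
  (Fintype.piFinset (fun _ => MD d)).filter
    (fun a => ∀ l l', l < l' → (a l').natDegree < (a l).natDegree)

lemma mem_Afin {r d : ℕ} {a : Fin r → Polynomial Fq} :
    a ∈ Afin (Fq := Fq) r d ↔
      ((∀ l, (a l).Monic) ∧ (∀ l l', l < l' → (a l').natDegree < (a l).natDegree) ∧
       (∀ l, (a l).natDegree < d)) := by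
  simp only [Afin, Finset.mem_filter, Fintype.mem_piFinset, mem_MD]
  constructor
  · rintro ⟨h1, h2⟩
    exact ⟨fun l => (h1 l).1, h2, fun l => (h1 l).2⟩
  · rintro ⟨h1, h2, h3⟩
    exact ⟨fun l => ⟨h1 l, h3 l⟩, h2⟩

lemma Sd_eq_finset (d : ℕ) {r : ℕ} (s : Fin r → ℕ) :
    Sd Fq d s = ∑ a ∈ Afin (Fq := Fq) r d, ∏ l, (am (a l))⁻¹ ^ s l := by
  rw [Sd, ← finsum_mem_coe_finset]
  congr 1
  ext a
  simp [mem_Afin]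

lemma Sd_rec (d : ℕ) {r : ℕ} (s : Fin (r+1) → ℕ) :
    Sd Fq d s = ∑ e ∈ Finset.range d, PP Fq e (s 0) * Sd Fq e (Fin.tail s) := by
  rw [Sd_eq_finset]
  have key : ∑ a ∈ Afin (Fq := Fq) (r+1) d, ∏ l, (am (a l))⁻¹ ^ s l
      = ∑ x ∈ (Finset.range d).sigma
          (fun e => (ME (Fq := Fq) e) ×ˢ (Afin (Fq := Fq) r e)),
        (am x.2.1)⁻¹ ^ s 0 * ∏ l, (am (x.2.2 l))⁻¹ ^ s l.succ := by
    refine Finset.sum_nbij' (fun a => ⟨(a 0).natDegree, (a 0, Fin.tail a)⟩)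
      (fun x => Fin.cons x.2.1 x.2.2) ?_ ?_ ?_ ?_ ?_
    · intro a ha
      rw [mem_Afin] at ha
      obtain ⟨h1, h2, h3⟩ := ha
      refine Finset.mem_sigma.2 ⟨Finset.mem_range.2 (h3 0), Finset.mem_product.2 ⟨?_, ?_⟩⟩
      · exact mem_ME.2 ⟨h1 0, rfl⟩
      · refine mem_Afin.2 ⟨fun l => h1 _, fun l l' h => h2 _ _ (by simpa using h), fun l => ?_⟩
        exact h2 0 l.succ (Fin.succ_pos l)
    · intro x hx
      obtain ⟨hxr, hxp⟩ := Finset.mem_sigma.1 hx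
      obtain ⟨hg, ha⟩ := Finset.mem_product.1 hxp
      rw [mem_ME] at hg
      rw [mem_Afin] at ha
      rw [Finset.mem_range] at hxr
      refine mem_Afin.2 ⟨?_, ?_, ?_⟩
      · intro l
        refine Fin.cases ?_ ?_ l
        · exact hg.1
        · intro i; exact ha.1 i
      · intro l l' h
        revert h
        refine Fin.cases (fun h => absurd h (Fin.not_lt_zero l)) (fun j => ?_) l'
        intro h
        simp only [Fin.cons_succ]
        revert h
        refine Fin.cases (fun h => ?_) (fun i h => ?_) l
        · simp only [Fin.cons_zero, hg.2]
          exact ha.2.2 j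
        · simp only [Fin.cons_succ]
          exact ha.2.1 i j (Fin.succ_lt_succ_iff.1 h)
      · intro l
        refine Fin.cases ?_ ?_ l
        · simpa [hg.2] using hxr
        · intro i
          exact lt_trans (ha.2.2 i) hxr
    · intro a _
      exact Fin.cons_self_tail a
    · rintro ⟨e, g, a⟩ hx
      obtain ⟨hxr, hxp⟩ := Finset.mem_sigma.1 hx
      obtain ⟨hg, _⟩ := Finset.mem_product.1 hxp
      rw [mem_ME] at hg
      simp only [Fin.cons_zero, Fin.tail_cons, hg.2]
    · intro a ha
      rw [Fin.prod_univ_succ]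
      rfl
  rw [key, Finset.sum_sigma]
  refine Finset.sum_congr rfl fun e _ => ?_
  rw [Finset.sum_product, PP_eq_sum_ME, Finset.sum_mul]
  refine Finset.sum_congr rfl fun g _ => ?_
  rw [Sd_eq_finset, Finset.mul_sum]
  rfl


lemma Afin_zero (d : ℕ) : Afin (Fq := Fq) 0 d = Finset.univ := by
  ext a
  refine ⟨fun _ => Finset.mem_univ _, fun _ => mem_Afin.2 ⟨fun l => l.elim0, fun l => l.elim0,
    fun l => l.elim0⟩⟩

lemma Sd_zero_tuple (d : ℕ) (s : Fin 0 → ℕ) : Sd Fq d s = 1 := by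
  rw [Sd_eq_finset, Afin_zero]
  simp

lemma Sd_eq_SL : ∀ {r : ℕ} (s : Fin r → ℕ) (d : ℕ), Sd Fq d s = SL Fq (List.ofFn s) d := by
  intro r
  induction r with
  | zero => intro s d; rw [Sd_zero_tuple, List.ofFn_zero, SL_nil]
  | succ r ih =>
    intro s d
    rw [Sd_rec, List.ofFn_succ, SL_cons]
    exact Finset.sum_congr rfl fun e _ => by rw [ih]; rfl

end Dev


/-- For tuples `s ∈ ℕ^r`, `s' ∈ ℕ^{r'}` of positive integers, there exist
finitely many tuples `s_1, …, s_m` of positive integers, each of weight `wt(s) + wt(s')`,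
and coefficients `f_1, …, f_m ∈ F_p` (represented as naturals `< p` cast into `F_q(θ)`,
which has characteristic `p`), independent of `d`, such that
`S_{<d}(s)·S_{<d}(s') = Σ_i f_i S_{<d}(s_i)` for every `d ≥ 0`. -/
theorem Sd_product_Fp_combination (Fq : Type) [Field Fq] [Fintype Fq]
    (p : ℕ) (hp : p.Prime) [CharP Fq p]
    {r r' : ℕ} (s : Fin r → ℕ) (s' : Fin r' → ℕ)
    (hs : ∀ l, 0 < s l) (hs' : ∀ l, 0 < s' l) :
    ∃ (m : ℕ) (t : Fin m → Σ n : ℕ, Fin n → ℕ) (f : Fin m → ℕ),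
      (∀ i l, 0 < (t i).2 l) ∧ (∀ i, f i < p) ∧
      (∀ i, ∑ l, (t i).2 l = (∑ l, s l) + ∑ l, s' l) ∧
      ∀ d : ℕ, Sd Fq d s * Sd Fq d s' = ∑ i, (f i : RatFunc Fq) * Sd Fq d (t i).2 := by
  classical
  haveI hchar : CharP (RatFunc Fq) p :=
    charP_of_injective_algebraMap (algebraMap Fq (RatFunc Fq)).injective p
  obtain ⟨L, hL, hE⟩ := stuffle (Fq := Fq) ((List.ofFn s).sum + (List.ofFn s').sum)
    (List.ofFn s) (List.ofFn s') le_rfl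
    (fun n hn => by obtain ⟨i, rfl⟩ := List.mem_ofFn.1 hn; exact hs i)
    (fun n hn => by obtain ⟨i, rfl⟩ := List.mem_ofFn.1 hn; exact hs' i)
  have hp0 : ((p : ℤ)) ≠ 0 := by exact_mod_cast hp.ne_zero
  have hcast : ∀ z : ℤ, (((z % (p:ℤ)).toNat : ℕ) : RatFunc Fq) = (z : RatFunc Fq) := by
    intro z
    have h1 : 0 ≤ z % (p:ℤ) := Int.emod_nonneg _ hp0
    rw [← Int.cast_natCast, Int.toNat_of_nonneg h1]
    conv_rhs => rw [← Int.mul_ediv_add_emod z (p:ℤ)]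
    rw [Int.cast_add, Int.cast_mul, Int.cast_natCast, CharP.cast_eq_zero (RatFunc Fq) p,
      zero_mul, zero_add]
  have hgen : ∀ l : List ℕ, (∑ j, l.get j) = l.sum := fun l => by
    conv_rhs => rw [← List.ofFn_get l]
    rw [List.sum_ofFn]
  refine ⟨L.length, fun i => ⟨(L.get i).2.length, fun j => (L.get i).2.get j⟩,
    fun i => ((L.get i).1 % (p : ℤ)).toNat, ?_, ?_, ?_, ?_⟩
  · intro i l
    exact (hL (L.get i) (L.get_mem i)).1 _ ((L.get i).2.get_mem l)
  · intro i
    show ((L.get i).1 % (p : ℤ)).toNat < p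
    have h1 : 0 ≤ (L.get i).1 % (p:ℤ) := Int.emod_nonneg _ hp0
    have h2 : (L.get i).1 % (p:ℤ) < p := Int.emod_lt_of_pos _ (by exact_mod_cast hp.pos)
    omega
  · intro i
    have hsum := (hL (L.get i) (L.get_mem i)).2
    rw [hgen, hsum, List.sum_ofFn, List.sum_ofFn]
  · intro d
    rw [Sd_eq_SL, Sd_eq_SL, hE d, Lcomb]
    have hlist : (L.map fun x => x.1 • SL Fq x.2 d).sum
        = ∑ i : Fin L.length, ((L.get i).1 : RatFunc Fq) * SL Fq (L.get i).2 d := by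
      conv_lhs => rw [← List.ofFn_get L]
      rw [List.map_ofFn, List.sum_ofFn]
      exact Finset.sum_congr rfl fun i _ => by simp [Function.comp, zsmul_eq_mul]
    rw [hlist]
    refine Finset.sum_congr rfl fun i _ => ?_
    rw [Sd_eq_SL, hcast]
    congr 1
    rw [List.ofFn_get]
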